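/- Assume τ = 0. A secondary structure with at least one link is saturated (no base pair can be added) if and only if its dual weighted rooted plane tree satisfies: every corner has weight at most θ+1, and at each node at most one incident corner has strictly positive weight. -/

import Mathlib

open scoped Classical

inductive RSym where
  | dot | op | cl
deriving DecidableEq

/-- Weighted rooted plane trees: `node w cs ks` has weight `w` on the edge to
its parent (ignored at the root), children `cs`, and corner-weight list `ks`
(one entry per corner, in planar order).  Edge weights record stem lengths
(a stem of edge weight `w` has `w + 1` links), corner weights record numbers
of free elements of segments. -/
inductive WTree where
  | node : ℕ → List WTree → List ℕ → WTree

namespace WTree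

def edgeW : WTree → ℕ
  | .node w _ _ => w

mutual
/-- The dot-bracket word of the secondary structure corresponding to the
tree, via the stem/segment-reduction duality. -/
def word : WTree → List RSym
  | .node _ cs ks => List.replicate ks.headI RSym.dot ++ wordL cs ks.tail

def wordL : List WTree → List ℕ → List RSym
  | [], _ => []
  | c :: cs, ks =>
      List.replicate (c.edgeW + 1) RSym.op ++ word c
        ++ List.replicate (c.edgeW + 1) RSym.cl
        ++ List.replicate ks.headI RSym.dot ++ wordL cs ks.tail
end

end WTree

/-- Excess of opening over closing parentheses among the first `k` symbols. -/
def depth (w : List RSym) (k : ℕ) : ℤ :=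
  ((w.take k).count RSym.op : ℤ) - ((w.take k).count RSym.cl : ℤ)

/-- Positions `i < j` (1-indexed) form a matched parenthesis pair of `w`. -/
def Matched (w : List RSym) (i j : ℕ) : Prop :=
  1 ≤ i ∧ i < j ∧ j ≤ w.length ∧
  w[i - 1]? = some RSym.op ∧ w[j - 1]? = some RSym.cl ∧
  depth w i = depth w (j - 1) ∧
  ∀ k, i ≤ k → k ≤ j - 1 → depth w i ≤ depth w k

/-- The secondary structure (set of base pairs) of a dot-bracket word. -/
noncomputable def structOf (w : List RSym) : Finset (ℕ × ℕ) :=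
  ((Finset.range (w.length + 1)) ×ˢ (Finset.range (w.length + 1))).filter
    (fun p => Matched w p.1 p.2)

def IsSecStr (θ n : ℕ) (P : Finset (ℕ × ℕ)) : Prop :=
  (∀ p ∈ P, 1 ≤ p.1 ∧ p.2 ≤ n ∧ p.1 + θ < p.2) ∧
  (∀ p ∈ P, ∀ q ∈ P, p ≠ q →
    p.1 ≠ q.1 ∧ p.1 ≠ q.2 ∧ p.2 ≠ q.1 ∧ p.2 ≠ q.2) ∧
  (∀ p ∈ P, ∀ q ∈ P, ¬(p.1 < q.1 ∧ q.1 < p.2 ∧ p.2 < q.2))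

/-- Saturated: no base pair can be added keeping a valid secondary structure. -/
def Saturated (θ n : ℕ) (P : Finset (ℕ × ℕ)) : Prop :=
  IsSecStr θ n P ∧ ∀ q : ℕ × ℕ, q ∉ P → ¬ IsSecStr θ n (insert q P)

/-- Admissibility at non-root nodes: the corner list has length arity + 1,
the edge weight is at least `τ`, corners at leaves have weight at least `θ`,
and a node with exactly one child has at least one of its two incident corners
of positive weight (so that the stem reduction was complete). -/
inductive AdmissibleNR (θ τ : ℕ) : WTree → Prop
  | node (w : ℕ) (cs : List WTree) (ks : List ℕ) :
      ks.length = cs.length + 1 →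
      τ ≤ w →
      (cs = [] → ∀ a ∈ ks, θ ≤ a) →
      (cs.length = 1 → 0 < ks.sum) →
      (∀ c ∈ cs, AdmissibleNR θ τ c) →
      AdmissibleNR θ τ (.node w cs ks)

/-- Admissibility of the whole weighted tree (the tree has at least one edge,
corresponding to a secondary structure with at least one link; the root has no
parent edge and is exempt from the arity-1 condition). -/
def Admissible (θ τ : ℕ) : WTree → Prop
  | .node _ cs ks =>
      ks.length = cs.length + 1 ∧ cs ≠ [] ∧ ∀ c ∈ cs, AdmissibleNR θ τ c

/-- All corner weights are at most `b`. -/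
inductive CornersLe (b : ℕ) : WTree → Prop
  | node (w : ℕ) (cs : List WTree) (ks : List ℕ) :
      (∀ a ∈ ks, a ≤ b) →
      (∀ c ∈ cs, CornersLe b c) →
      CornersLe b (.node w cs ks)

/-- At each node, at most one incident corner has strictly positive weight. -/
inductive AtMostOnePos : WTree → Prop
  | node (w : ℕ) (cs : List WTree) (ks : List ℕ) :
      (ks.filter (fun a => 0 < a)).length ≤ 1 →
      (∀ c ∈ cs, AtMostOnePos c) →
      AtMostOnePos (.node w cs ks)

namespace SatProof
open RSym WTree

def dW (w : List RSym) : ℤ := (w.count RSym.op : ℤ) - (w.count RSym.cl : ℤ)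

lemma depth_eq (w : List RSym) (k : ℕ) : depth w k = dW (w.take k) := rfl

@[simp] lemma dW_nil : dW [] = 0 := rfl

lemma dW_append (x y : List RSym) : dW (x ++ y) = dW x + dW y := by
  simp [dW, List.count_append]; ring

@[simp] lemma dW_dots (k : ℕ) : dW (List.replicate k RSym.dot) = 0 := by
  simp [dW, List.count_replicate]

@[simp] lemma dW_ops (k : ℕ) : dW (List.replicate k RSym.op) = k := by
  simp [dW, List.count_replicate]

@[simp] lemma dW_cls (k : ℕ) : dW (List.replicate k RSym.cl) = -k := by
  simp [dW, List.count_replicate]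

lemma depth_of_le (w : List RSym) {k : ℕ} (h : w.length ≤ k) : depth w k = dW w := by
  rw [depth_eq, List.take_of_length_le h]

lemma depth_append_left {x : List RSym} (y : List RSym) {k : ℕ} (h : k ≤ x.length) :
    depth (x ++ y) k = depth x k := by
  rw [depth_eq, depth_eq, List.take_append]
  have : k - x.length = 0 := by omega
  simp [this]

lemma depth_append_right (x y : List RSym) (k : ℕ) :
    depth (x ++ y) (x.length + k) = dW x + depth y k := by
  rw [depth_eq, depth_eq, List.take_append, dW_append]
  congr 2
  · rw [List.take_of_length_le (by omega)]
  · congr 1; omega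

lemma depth_zero (w : List RSym) : depth w 0 = 0 := rfl

structure Good (w : List RSym) : Prop where
  bal : dW w = 0
  nonneg : ∀ k, 0 ≤ depth w k

lemma Good.nil : Good [] := ⟨rfl, fun k => by simp [depth_eq]⟩

lemma Good.dots (k : ℕ) : Good (List.replicate k RSym.dot) := by
  refine ⟨by simp, fun m => ?_⟩
  rw [depth_eq]
  rcases le_or_gt k m with h | h
  · rw [List.take_of_length_le (by simpa using h)]; simp
  · rw [List.take_replicate]; simp

lemma Good.append {x y : List RSym} (hx : Good x) (hy : Good y) : Good (x ++ y) := by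
  refine ⟨by rw [dW_append, hx.bal, hy.bal]; ring, fun k => ?_⟩
  rcases le_or_gt k x.length with h | h
  · rw [depth_append_left y h]; exact hx.nonneg k
  · have : k = x.length + (k - x.length) := by omega
    rw [this, depth_append_right, hx.bal]
    simpa using hy.nonneg _

end SatProof
namespace SatProof
open RSym WTree

lemma depth_succ (w : List RSym) (k : ℕ) :
    depth w (k + 1) = depth w k +
      (match w[k]? with
        | some RSym.op => 1
        | some RSym.cl => -1
        | _ => 0) := by
  rw [depth_eq, depth_eq, List.take_succ]
  rcases h : w[k]? with _ | s
  · simp [dW_append, h]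
  · rcases s <;> simp [dW_append, h, dW, List.count_cons] <;> ring

lemma depth_succ_op {w : List RSym} {k : ℕ} (h : w[k]? = some RSym.op) :
    depth w (k + 1) = depth w k + 1 := by rw [depth_succ, h]

lemma depth_succ_cl {w : List RSym} {k : ℕ} (h : w[k]? = some RSym.cl) :
    depth w (k + 1) = depth w k - 1 := by rw [depth_succ, h]; ring

lemma depth_succ_dot {w : List RSym} {k : ℕ} (h : w[k]? = some RSym.dot) :
    depth w (k + 1) = depth w k := by rw [depth_succ, h]; ring

lemma depth_step_abs (w : List RSym) (k : ℕ) :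
    depth w k - 1 ≤ depth w (k + 1) ∧ depth w (k + 1) ≤ depth w k + 1 := by
  rw [depth_succ]
  rcases h : w[k]? with _ | s
  · constructor <;> simp
  · rcases s <;> constructor <;> simp <;> omega

/-- symbol is cl when depth strictly drops -/
lemma sym_cl_of_drop {w : List RSym} {k : ℕ} (h : depth w (k + 1) < depth w k) :
    w[k]? = some RSym.cl ∧ depth w (k+1) = depth w k - 1 := by
  rcases hs : w[k]? with _ | s
  · rw [depth_succ, hs] at h; simp at h
  · rcases s
    · rw [depth_succ_dot hs] at h; omega
    · rw [depth_succ_op hs] at h; omega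
    · exact ⟨rfl, depth_succ_cl hs⟩

lemma sym_op_of_rise {w : List RSym} {k : ℕ} (h : depth w k < depth w (k + 1)) :
    w[k]? = some RSym.op ∧ depth w (k+1) = depth w k + 1 := by
  rcases hs : w[k]? with _ | s
  · rw [depth_succ, hs] at h; simp at h
  · rcases s
    · rw [depth_succ_dot hs] at h; omega
    · exact ⟨rfl, depth_succ_op hs⟩
    · rw [depth_succ_cl hs] at h; omega

lemma depth_stable {w : List RSym} {k : ℕ} (h : w.length ≤ k) :
    depth w k = dW w := depth_of_le w h

/-- wrapped word : op^m ++ u ++ cl^m -/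
def wrap (m : ℕ) (u : List RSym) : List RSym :=
  List.replicate m RSym.op ++ u ++ List.replicate m RSym.cl

lemma wrap_length (m : ℕ) (u : List RSym) : (wrap m u).length = m + u.length + m := by
  simp [wrap]; ring

lemma Good.wrap {u : List RSym} (hu : Good u) (m : ℕ) : Good (SatProof.wrap m u) := by
  refine ⟨by simp [SatProof.wrap, dW_append, hu.bal], fun k => ?_⟩
  rcases le_or_gt k m with h | h
  · rw [SatProof.wrap, List.append_assoc, depth_append_left _ (by simpa using h)]
    rw [depth_eq, List.take_replicate]
    simp
  · rcases le_or_gt k (m + u.length) with h2 | h2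
    · have : k = (List.replicate m RSym.op).length + (k - m) := by simp; omega
      rw [SatProof.wrap, List.append_assoc, this, depth_append_right,
        depth_append_left _ (by omega), dW_ops]
      have := hu.nonneg (k - m)
      omega
    · have hk : k = (List.replicate m RSym.op ++ u).length + (k - m - u.length) := by
        simp; omega
      rw [SatProof.wrap, hk, depth_append_right, dW_append, dW_ops, hu.bal]
      rw [depth_eq, List.take_replicate]
      rcases le_or_gt m (k - m - u.length) with h3 | h3
      · simp [min_eq_left h3, dW_cls]
      · simp [min_eq_right h3.le, dW_cls]

lemma depth_wrap_mid {u : List RSym} (hu : Good u) (m k : ℕ) (hk : k ≤ u.length) :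
    depth (wrap m u) (m + k) = m + depth u k := by
  have h1 := depth_append_right (List.replicate m RSym.op) (u ++ List.replicate m RSym.cl) k
  rw [List.length_replicate] at h1
  rw [wrap, List.append_assoc, h1, depth_append_left _ hk, dW_ops]

lemma getElem?_wrap_mid (u : List RSym) (m k : ℕ) (hk : k < u.length) :
    (wrap m u)[m + k]? = u[k]? := by
  rw [wrap, List.append_assoc, List.getElem?_append_right (by simp), ]
  simp only [List.length_replicate, Nat.add_sub_cancel_left]
  rw [List.getElem?_append_left hk]

end SatProof
namespace SatProof
open RSym WTree

lemma depth_pred_op {w : List RSym} {i : ℕ} (hi : 1 ≤ i) (h : w[i-1]? = some RSym.op) :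
    depth w i = depth w (i-1) + 1 := by
  have := depth_succ_op h; rwa [Nat.sub_add_cancel hi] at this

lemma depth_pred_cl {w : List RSym} {i : ℕ} (hi : 1 ≤ i) (h : w[i-1]? = some RSym.cl) :
    depth w i = depth w (i-1) - 1 := by
  have := depth_succ_cl h; rwa [Nat.sub_add_cancel hi] at this

lemma depth_pred_dot {w : List RSym} {i : ℕ} (hi : 1 ≤ i) (h : w[i-1]? = some RSym.dot) :
    depth w i = depth w (i-1) := by
  have := depth_succ_dot h; rwa [Nat.sub_add_cancel hi] at this

lemma lt_length_of_getElem? {w : List RSym} {k : ℕ} {s : RSym} (h : w[k]? = some s) :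
    k < w.length := by
  by_contra hc
  rw [List.getElem?_eq_none (by omega)] at h
  cases h

/-- every opening symbol is matched (balanced word) -/
lemma exists_match_op {w : List RSym} (hw : Good w) {i : ℕ} (hi : 1 ≤ i)
    (hop : w[i-1]? = some RSym.op) : ∃ j, Matched w i j := by
  have hilen : i - 1 < w.length := lt_length_of_getElem? hop
  have hdi : depth w i = depth w (i-1) + 1 := depth_pred_op hi hop
  have hdi1 : 1 ≤ depth w i := by have := hw.nonneg (i-1); omega
  have hex : ∃ j, i < j ∧ depth w j < depth w i := by
    refine ⟨w.length + 1, by omega, ?_⟩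
    rw [depth_of_le w (by omega), hw.bal]; omega
  classical
  set j := Nat.find hex with hjdef
  obtain ⟨hij, hdj⟩ : i < j ∧ depth w j < depth w i := Nat.find_spec hex
  have hmin : ∀ m, m < j → ¬(i < m ∧ depth w m < depth w i) := fun m hm => Nat.find_min hex hm
  have hk : ∀ m, i ≤ m → m < j → depth w i ≤ depth w m := by
    intro m him hmj
    rcases eq_or_lt_of_le him with rfl | h
    · exact le_refl _
    · by_contra hc
      exact hmin m hmj ⟨h, by omega⟩
  have hkj : depth w i ≤ depth w (j-1) := hk (j-1) (by omega) (by omega)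
  have hdrop : depth w ((j-1)+1) < depth w (j-1) := by
    rw [Nat.sub_add_cancel (by omega)]; omega
  obtain ⟨hsym, hstep⟩ := sym_cl_of_drop hdrop
  rw [Nat.sub_add_cancel (by omega)] at hstep
  have hjlen : j ≤ w.length := by
    have := lt_length_of_getElem? hsym; omega
  refine ⟨j, hi, hij, hjlen, hop, hsym, by omega, ?_⟩
  intro k h1 h2
  exact hk k h1 (by omega)

/-- every closing symbol is matched -/
lemma exists_match_cl {w : List RSym} (hw : Good w) {j : ℕ} (hj : 1 ≤ j)
    (hcl : w[j-1]? = some RSym.cl) : ∃ i, Matched w i j := by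
  classical
  have hjlen : j - 1 < w.length := lt_length_of_getElem? hcl
  have hdj : depth w j = depth w (j-1) - 1 := depth_pred_cl hj hcl
  set d : ℤ := depth w j with hd
  have hd0 : 0 ≤ d := hw.nonneg j
  set P : ℕ → Prop := fun k => depth w k ≤ d with hP
  have hP0 : P 0 := by simp [hP, depth_zero]; omega
  set t := Nat.findGreatest P (j-1) with ht
  have hPt : P t := Nat.findGreatest_spec (m := 0) (by omega) hP0
  have htle : t ≤ j - 1 := Nat.findGreatest_le _
  have hgt : ∀ m, t < m → m ≤ j - 1 → ¬ P m := fun m h1 h2 =>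
    Nat.findGreatest_is_greatest h1 h2
  have htne : t ≠ j - 1 := by
    intro h; rw [h] at hPt; simp only [hP] at hPt; omega
  have hit : t + 1 ≤ j - 1 := by omega
  have hdep : ∀ m, t + 1 ≤ m → m ≤ j - 1 → d + 1 ≤ depth w m := by
    intro m h1 h2
    have := hgt m (by omega) h2
    simp only [hP] at this; omega
  have hrise : depth w t < depth w (t+1) := by
    have h1 := hdep (t+1) le_rfl hit
    simp only [hP] at hPt; omega
  obtain ⟨hsym, hstep⟩ := sym_op_of_rise hrise
  have heqi : depth w (t+1) = d + 1 := by
    have := hdep (t+1) le_rfl hit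
    simp only [hP] at hPt; omega
  refine ⟨t+1, by omega, by omega, by omega, ?_, hcl, ?_, ?_⟩
  · simpa using hsym
  · omega
  · intro k h1 h2
    have := hdep k h1 h2; omega

lemma matched_right_unique {w : List RSym} {i j j' : ℕ}
    (h : Matched w i j) (h' : Matched w i j') : j = j' := by
  obtain ⟨hi1, hij, hjlen, hop, hcl, heq, hmin⟩ := h
  obtain ⟨_, hij', hjlen', _, hcl', heq', hmin'⟩ := h'
  by_contra hne
  rcases lt_or_gt_of_ne hne with hlt | hlt
  · have hdj : depth w j = depth w (j-1) - 1 := depth_pred_cl (by omega) hcl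
    have := hmin' j (by omega) (by omega)
    omega
  · have hdj : depth w j' = depth w (j'-1) - 1 := depth_pred_cl (by omega) hcl'
    have := hmin j' (by omega) (by omega)
    omega

lemma matched_left_unique {w : List RSym} {i i' j : ℕ}
    (h : Matched w i j) (h' : Matched w i' j) : i = i' := by
  obtain ⟨hi1, hij, hjlen, hop, hcl, heq, hmin⟩ := h
  obtain ⟨hi1', hij', hjlen', hop', hcl', heq', hmin'⟩ := h'
  by_contra hne
  rcases lt_or_gt_of_ne hne with hlt | hlt
  · have hdi : depth w i' = depth w (i'-1) + 1 := depth_pred_op (by omega) hop'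
    have h1 := hmin (i'-1) (by omega) (by omega)
    have h2 := hmin' (j-1) (by omega) (by omega)
    omega
  · have hdi : depth w i = depth w (i-1) + 1 := depth_pred_op (by omega) hop
    have h1 := hmin' (i-1) (by omega) (by omega)
    have h2 := hmin (j-1) (by omega) (by omega)
    omega

lemma matched_noncross {w : List RSym} {i j i' j' : ℕ}
    (h : Matched w i j) (h' : Matched w i' j')
    (h1 : i < i') (h2 : i' < j) (h3 : j < j') : False := by
  obtain ⟨hi1, hij, hjlen, hop, hcl, heq, hmin⟩ := h
  obtain ⟨hi1', hij', hjlen', hop', hcl', heq', hmin'⟩ := h'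
  have e1 : depth w i' = depth w (i'-1) + 1 := depth_pred_op (by omega) hop'
  have e2 : depth w j = depth w (j-1) - 1 := depth_pred_cl (by omega) hcl
  have k1 := hmin (i'-1) (by omega) (by omega)
  have k2 := hmin' j (by omega) (by omega)
  omega

end SatProof
namespace SatProof
open RSym WTree

def Free0 (w : List RSym) (a : ℕ) : Prop :=
  1 ≤ a ∧ a ≤ w.length ∧ w[a-1]? = some RSym.dot ∧ depth w a = 0

def Addable (θ : ℕ) (w : List RSym) (a b : ℕ) : Prop :=
  1 ≤ a ∧ a + θ < b ∧ b ≤ w.length ∧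
  w[a-1]? = some RSym.dot ∧ w[b-1]? = some RSym.dot ∧
  depth w a = depth w b ∧ ∀ k, a ≤ k → k ≤ b → depth w a ≤ depth w k

def HasAdd (θ : ℕ) (w : List RSym) : Prop := ∃ a b, Addable θ w a b

def HasF0 (w : List RSym) : Prop := ∃ a, Free0 w a

lemma not_hasF0_nil : ¬ HasF0 [] := by rintro ⟨a, h1, h2, -⟩; simp at h2; omega

lemma not_hasAdd_nil {θ : ℕ} : ¬ HasAdd θ [] := by
  rintro ⟨a, b, h1, h2, h3, -⟩; simp at h3; omega

lemma depth_append_of_ge {x : List RSym} (y : List RSym) (hx : dW x = 0) {k : ℕ}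
    (h : x.length ≤ k) : depth (x ++ y) k = depth y (k - x.length) := by
  have h1 := depth_append_right x y (k - x.length)
  rw [hx, zero_add] at h1
  rw [← h1]; congr 1; omega

lemma getElem?_append_left' {x y : List RSym} {k : ℕ} (h : k < x.length) :
    (x ++ y)[k]? = x[k]? := List.getElem?_append_left h

lemma getElem?_append_right' {x y : List RSym} {k : ℕ} (h : x.length ≤ k) :
    (x ++ y)[k]? = y[k - x.length]? := List.getElem?_append_right h

lemma free0_append {x y : List RSym} (hx : dW x = 0) {a : ℕ} :
    Free0 (x ++ y) a ↔ (a ≤ x.length ∧ Free0 x a) ∨ (x.length < a ∧ Free0 y (a - x.length)) := by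
  constructor
  · rintro ⟨h1, h2, h3, h4⟩
    rcases le_or_gt a x.length with h | h
    · refine Or.inl ⟨h, h1, h, ?_, ?_⟩
      · rwa [getElem?_append_left' (by omega)] at h3
      · rwa [depth_append_left y h] at h4
    · refine Or.inr ⟨h, by omega, by simp at h2; omega, ?_, ?_⟩
      · rw [getElem?_append_right' (by omega)] at h3
        rwa [show a - 1 - x.length = a - x.length - 1 by omega] at h3
      · rwa [depth_append_of_ge y hx (by omega)] at h4
  · rintro (⟨h, h1, h2, h3, h4⟩ | ⟨h, h1, h2, h3, h4⟩)
    · exact ⟨h1, by simp; omega, by rwa [getElem?_append_left' (by omega)], by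
        rwa [depth_append_left y h]⟩
    · refine ⟨by omega, by simp; omega, ?_, by rwa [depth_append_of_ge y hx (by omega)]⟩
      rw [getElem?_append_right' (by omega),
        show a - 1 - x.length = a - x.length - 1 by omega]
      exact h3

lemma hasAdd_append {θ : ℕ} {x y : List RSym} (hx : Good x) (hy : Good y)
    (hcross : ∀ a b, Free0 x a → Free0 y b → a + θ < x.length + b) :
    HasAdd θ (x ++ y) ↔ HasAdd θ x ∨ HasAdd θ y ∨ (HasF0 x ∧ HasF0 y) := by
  constructor
  · rintro ⟨a, b, h1, h2, h3, h4, h5, h6, h7⟩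
    rcases le_or_gt b x.length with hb | hb
    · refine Or.inl ⟨a, b, h1, h2, hb, ?_, ?_, ?_, ?_⟩
      · rwa [getElem?_append_left' (by omega)] at h4
      · rwa [getElem?_append_left' (by omega)] at h5
      · rwa [depth_append_left y (by omega), depth_append_left y hb] at h6
      · intro k hk1 hk2
        have := h7 k hk1 hk2
        rwa [depth_append_left y (by omega), depth_append_left y (by omega)] at this
    rcases le_or_gt a x.length with ha | ha
    · -- cross
      have hda : depth (x ++ y) a = 0 := by
        have h8 := h7 x.length ha (by omega)
        have h9 : depth (x ++ y) x.length = 0 := by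
          rw [depth_append_left y le_rfl, depth_eq, List.take_length]; exact hx.bal
        have := (hx.append hy).nonneg a
        omega
      refine Or.inr (Or.inr ⟨⟨a, h1, ha, ?_, ?_⟩, ⟨b - x.length, by omega, by simp at h3; omega, ?_, ?_⟩⟩)
      · rwa [getElem?_append_left' (by omega)] at h4
      · rwa [depth_append_left y ha] at hda
      · rw [getElem?_append_right' (by omega),
          show b - 1 - x.length = b - x.length - 1 by omega] at h5
        exact h5
      · have := depth_append_of_ge y hx.bal (k := b) (by omega)
        omega
    · refine Or.inr (Or.inl ⟨a - x.length, b - x.length, by omega, by omega,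
        by simp at h3; omega, ?_, ?_, ?_, ?_⟩)
      · rw [getElem?_append_right' (by omega),
          show a - 1 - x.length = a - x.length - 1 by omega] at h4
        exact h4
      · rw [getElem?_append_right' (by omega),
          show b - 1 - x.length = b - x.length - 1 by omega] at h5
        exact h5
      · rw [depth_append_of_ge y hx.bal (by omega : x.length ≤ a),
          depth_append_of_ge y hx.bal (by omega : x.length ≤ b)] at h6
        exact h6
      · intro k hk1 hk2
        have := h7 (x.length + k) (by omega) (by omega)
        rw [depth_append_of_ge y hx.bal (by omega : x.length ≤ a),
          depth_append_of_ge y hx.bal (by omega : x.length ≤ x.length + k)] at this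
        simpa using this
  · rintro (⟨a, b, h1, h2, h3, h4, h5, h6, h7⟩ | ⟨a, b, h1, h2, h3, h4, h5, h6, h7⟩ |
      ⟨⟨a, ha1, ha2, ha3, ha4⟩, ⟨b, hb1, hb2, hb3, hb4⟩⟩)
    · refine ⟨a, b, h1, h2, by simp; omega, ?_, ?_, ?_, ?_⟩
      · rwa [getElem?_append_left' (by omega)]
      · rwa [getElem?_append_left' (by omega)]
      · rwa [depth_append_left y (by omega), depth_append_left y h3]
      · intro k hk1 hk2
        rw [depth_append_left y (by omega), depth_append_left y (by omega)]
        exact h7 k hk1 hk2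
    · refine ⟨x.length + a, x.length + b, by omega, by omega, by simp; omega, ?_, ?_, ?_, ?_⟩
      · rw [getElem?_append_right' (by omega),
          show x.length + a - 1 - x.length = a - 1 by omega]
        exact h4
      · rw [getElem?_append_right' (by omega),
          show x.length + b - 1 - x.length = b - 1 by omega]
        exact h5
      · rw [depth_append_of_ge y hx.bal (by omega), depth_append_of_ge y hx.bal (by omega)]
        simpa using h6
      · intro k hk1 hk2
        rw [depth_append_of_ge y hx.bal (by omega),
          depth_append_of_ge y hx.bal (by omega : x.length ≤ k)]
        have := h7 (k - x.length) (by omega) (by omega)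
        simpa using this
    · refine ⟨a, x.length + b, ha1, hcross a b ⟨ha1, ha2, ha3, ha4⟩ ⟨hb1, hb2, hb3, hb4⟩,
        by simp; omega, ?_, ?_, ?_, ?_⟩
      · rwa [getElem?_append_left' (by omega)]
      · rw [getElem?_append_right' (by omega),
          show x.length + b - 1 - x.length = b - 1 by omega]
        exact hb3
      · rw [depth_append_left y ha2, depth_append_of_ge y hx.bal (by omega)]
        simp [ha4]
        omega
      · intro k hk1 hk2
        rw [depth_append_left y ha2, ha4]
        rcases le_or_gt k x.length with h | h
        · rw [depth_append_left y h]; exact hx.nonneg k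
        · rw [depth_append_of_ge y hx.bal (by omega)]; exact hy.nonneg _
end SatProof
namespace SatProof
open RSym WTree

lemma getElem?_wrap_left {u : List RSym} {m k : ℕ} (h : k < m) :
    (wrap m u)[k]? = some RSym.op := by
  rw [wrap, List.append_assoc, getElem?_append_left' (by simpa using h)]
  simp [List.getElem?_replicate, h]

lemma getElem?_wrap_right {u : List RSym} {m k : ℕ} (h1 : m + u.length ≤ k)
    (h2 : k < m + u.length + m) : (wrap m u)[k]? = some RSym.cl := by
  rw [wrap, getElem?_append_right' (by simp; omega)]
  simp only [List.length_append, List.length_replicate]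
  rw [List.getElem?_replicate]
  simp; omega

lemma depth_wrap_left {u : List RSym} {k m : ℕ} (h : k ≤ m) :
    depth (wrap m u) k = k := by
  rw [wrap, List.append_assoc, depth_append_left _ (by simpa using h), depth_eq,
    List.take_replicate, min_eq_left h]
  simp

lemma free0_wrap {u : List RSym} (hu : Good u) {m : ℕ} (hm : 1 ≤ m) {a : ℕ} :
    ¬ Free0 (wrap m u) a := by
  rintro ⟨h1, h2, h3, h4⟩
  rw [wrap_length] at h2
  rcases lt_or_ge (a-1) m with h | h
  · rw [getElem?_wrap_left h] at h3; exact RSym.noConfusion (Option.some.inj h3)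
  rcases lt_or_ge (a-1) (m + u.length) with h' | h'
  · have ha : a = m + (a - m) := by omega
    rw [ha, depth_wrap_mid hu m (a-m) (by omega)] at h4
    have := hu.nonneg (a - m)
    omega
  · rw [getElem?_wrap_right h' (by omega)] at h3
    exact RSym.noConfusion (Option.some.inj h3)

lemma not_hasF0_wrap {u : List RSym} (hu : Good u) {m : ℕ} (hm : 1 ≤ m) :
    ¬ HasF0 (wrap m u) := by rintro ⟨a, ha⟩; exact free0_wrap hu hm ha

lemma hasAdd_wrap {θ : ℕ} {u : List RSym} (hu : Good u) {m : ℕ} (hm : 1 ≤ m) :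
    HasAdd θ (wrap m u) ↔ HasAdd θ u := by
  constructor
  · rintro ⟨a, b, h1, h2, h3, h4, h5, h6, h7⟩
    rw [wrap_length] at h3
    -- a and b are dots hence in the middle region
    have hmid : ∀ c, 1 ≤ c → c ≤ m + u.length + m → (wrap m u)[c-1]? = some RSym.dot →
        m < c ∧ c ≤ m + u.length := by
      intro c hc1 hc2 hc3
      rcases lt_or_ge (c-1) m with h | h
      · rw [getElem?_wrap_left h] at hc3; exact RSym.noConfusion (Option.some.inj hc3)
      rcases lt_or_ge (c-1) (m + u.length) with h' | h'
      · omega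
      · rw [getElem?_wrap_right h' (by omega)] at hc3
        exact RSym.noConfusion (Option.some.inj hc3)
    obtain ⟨ha1, ha2⟩ := hmid a h1 (by omega) h4
    obtain ⟨hb1, hb2⟩ := hmid b (by omega) h3 h5
    refine ⟨a - m, b - m, by omega, by omega, by omega, ?_, ?_, ?_, ?_⟩
    · have := getElem?_wrap_mid u m (a - m - 1) (by omega)
      rw [show m + (a - m - 1) = a - 1 by omega] at this
      rw [← this]; exact h4
    · have := getElem?_wrap_mid u m (b - m - 1) (by omega)
      rw [show m + (b - m - 1) = b - 1 by omega] at this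
      rw [← this]; exact h5
    · have e1 := depth_wrap_mid hu m (a - m) (by omega)
      have e2 := depth_wrap_mid hu m (b - m) (by omega)
      rw [show m + (a - m) = a by omega] at e1
      rw [show m + (b - m) = b by omega] at e2
      omega
    · intro k hk1 hk2
      have e1 := depth_wrap_mid hu m (a - m) (by omega)
      have e2 := depth_wrap_mid hu m k (by omega)
      rw [show m + (a - m) = a by omega] at e1
      have := h7 (m + k) (by omega) (by omega)
      omega
  · rintro ⟨a, b, h1, h2, h3, h4, h5, h6, h7⟩
    refine ⟨m + a, m + b, by omega, by omega, by rw [wrap_length]; omega, ?_, ?_, ?_, ?_⟩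
    · have := getElem?_wrap_mid u m (a - 1) (by omega)
      rw [show m + (a-1) = m + a - 1 by omega] at this
      rw [this]; exact h4
    · have := getElem?_wrap_mid u m (b - 1) (by omega)
      rw [show m + (b-1) = m + b - 1 by omega] at this
      rw [this]; exact h5
    · rw [depth_wrap_mid hu m a (by omega), depth_wrap_mid hu m b (by omega)]
      omega
    · intro k hk1 hk2
      rw [depth_wrap_mid hu m a (by omega),
        show k = m + (k - m) by omega, depth_wrap_mid hu m (k - m) (by omega)]
      have := h7 (k - m) (by omega) (by omega)
      omega

lemma depth_dots (k a : ℕ) : depth (List.replicate k RSym.dot) a = 0 := by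
  rw [depth_eq]
  rcases le_or_gt k a with h | h
  · rw [List.take_of_length_le (by simpa using h)]; simp
  · rw [List.take_replicate]; simp

lemma free0_dots {k a : ℕ} :
    Free0 (List.replicate k RSym.dot) a ↔ 1 ≤ a ∧ a ≤ k := by
  constructor
  · rintro ⟨h1, h2, -, -⟩; exact ⟨h1, by simpa using h2⟩
  · rintro ⟨h1, h2⟩
    refine ⟨h1, by simpa using h2, ?_, depth_dots k a⟩
    rw [List.getElem?_replicate]
    simp; omega

lemma hasF0_dots {k : ℕ} : HasF0 (List.replicate k RSym.dot) ↔ 0 < k := by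
  constructor
  · rintro ⟨a, ha⟩; rw [free0_dots] at ha; omega
  · intro h; exact ⟨1, free0_dots.2 ⟨le_rfl, h⟩⟩

lemma hasAdd_dots {θ k : ℕ} : HasAdd θ (List.replicate k RSym.dot) ↔ θ + 2 ≤ k := by
  constructor
  · rintro ⟨a, b, h1, h2, h3, -⟩; simp at h3; omega
  · intro h
    refine ⟨1, θ + 2, le_rfl, by omega, by simpa using h, ?_, ?_, ?_, ?_⟩
    · rw [List.getElem?_replicate]; simp; omega
    · rw [List.getElem?_replicate]; simp; omega
    · rw [depth_dots, depth_dots]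
    · intro m h1 h2; rw [depth_dots, depth_dots]

lemma not_hasAdd_dots {θ k : ℕ} (h : k ≤ θ + 1) : ¬ HasAdd θ (List.replicate k RSym.dot) := by
  rw [hasAdd_dots]; omega

/-- matched pairs do not straddle a balanced split -/
lemma matched_append {x y : List RSym} (hx : Good x) (hy : Good y) {i j : ℕ}
    (h : Matched (x ++ y) i j) :
    (j ≤ x.length ∧ Matched x i j) ∨
    (x.length < i ∧ Matched y (i - x.length) (j - x.length)) := by
  obtain ⟨h1, h2, h3, h4, h5, h6, h7⟩ := h
  have hnn := (hx.append hy).nonneg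
  have hstrad : ¬ (i ≤ x.length ∧ x.length < j) := by
    rintro ⟨hs1, hs2⟩
    have e1 : depth (x ++ y) x.length = 0 := by
      rw [depth_append_left y le_rfl, depth_eq, List.take_length]; exact hx.bal
    have e2 : depth (x ++ y) i = depth (x ++ y) (i-1) + 1 := depth_pred_op h1 h4
    have e3 := hnn (i - 1)
    have := h7 x.length hs1 (by omega)
    omega
  rcases le_or_gt j x.length with hj | hj
  · refine Or.inl ⟨hj, h1, h2, hj, ?_, ?_, ?_, ?_⟩
    · rw [← getElem?_append_left' (x := x) (y := y) (by omega)]; exact h4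
    · rw [← getElem?_append_left' (x := x) (y := y) (by omega)]; exact h5
    · rwa [depth_append_left y (by omega), depth_append_left y (by omega)] at h6
    · intro k hk1 hk2
      have := h7 k hk1 hk2
      rwa [depth_append_left y (by omega), depth_append_left y (by omega)] at this
  · have hi : x.length < i := by
      by_contra hc; exact hstrad ⟨by omega, hj⟩
    refine Or.inr ⟨hi, by omega, by omega, by simp at h3; omega, ?_, ?_, ?_, ?_⟩
    · rw [getElem?_append_right' (by omega : x.length ≤ i - 1)] at h4
      rwa [show i - 1 - x.length = i - x.length - 1 by omega] at h4
    · rw [getElem?_append_right' (by omega : x.length ≤ j - 1)] at h5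
      rwa [show j - 1 - x.length = j - x.length - 1 by omega] at h5
    · rw [depth_append_of_ge y hx.bal (by omega : x.length ≤ i)] at h6
      rw [depth_append_of_ge y hx.bal (by omega : x.length ≤ j - 1)] at h6
      rwa [show j - 1 - x.length = j - x.length - 1 by omega] at h6
    · intro k hk1 hk2
      have := h7 (x.length + k) (by omega) (by omega)
      rw [depth_append_of_ge y hx.bal (by omega : x.length ≤ i),
        depth_append_of_ge y hx.bal (by omega : x.length ≤ x.length + k)] at this
      simpa using this

/-- matched pairs of a wrapped word: inner pair or long pair -/
lemma matched_wrap {u : List RSym} (hu : Good u) {m i j : ℕ}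
    (h : Matched (wrap m u) i j) :
    Matched u (i - m) (j - m) ∨ u.length + 1 ≤ j - i := by
  obtain ⟨h1, h2, h3, h4, h5, h6, h7⟩ := h
  rw [wrap_length] at h3
  rcases le_or_gt i m with hi | hi
  · -- i in op region; show j > m + u.length
    right
    rcases le_or_gt j (m + u.length) with hj | hj
    · exfalso
      have hjm : m < j := by
        by_contra hc
        rw [getElem?_wrap_left (by omega)] at h5
        exact RSym.noConfusion (Option.some.inj h5)
      have e1 : depth (wrap m u) i = i := depth_wrap_left hi
      have e2 : depth (wrap m u) (j-1) = m + depth u (j-1-m) := by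
        have := depth_wrap_mid hu m (j-1-m) (by omega)
        rwa [show m + (j-1-m) = j - 1 by omega] at this
      have e3 : u[j-1-m]? = some RSym.cl := by
        have := getElem?_wrap_mid u m (j-1-m) (by omega)
        rw [show m + (j-1-m) = j-1 by omega] at this
        rw [← this]; exact h5
      have e4 : depth u (j-m) = depth u (j-1-m) - 1 := by
        have := depth_succ_cl e3
        rwa [show j-1-m+1 = j-m by omega] at this
      have e5 := hu.nonneg (j - m)
      have e6 := hu.nonneg (j - 1 - m)
      omega
    · omega
  · rcases le_or_gt j (m + u.length) with hj | hj
    · -- both in middle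
      left
      refine ⟨by omega, by omega, by omega, ?_, ?_, ?_, ?_⟩
      · have := getElem?_wrap_mid u m (i - 1 - m) (by omega)
        rw [show m + (i-1-m) = i - 1 by omega] at this
        rw [show i - m - 1 = i - 1 - m by omega, ← this]; exact h4
      · have := getElem?_wrap_mid u m (j - 1 - m) (by omega)
        rw [show m + (j-1-m) = j - 1 by omega] at this
        rw [show j - m - 1 = j - 1 - m by omega, ← this]; exact h5
      · have e1 := depth_wrap_mid hu m (i - m) (by omega)
        have e2 := depth_wrap_mid hu m (j - m - 1) (by omega)
        rw [show m + (i - m) = i by omega] at e1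
        rw [show m + (j - m - 1) = j - 1 by omega] at e2
        rw [show j - m - 1 = j - 1 - m by omega] at e2 ⊢
        omega
      · intro k hk1 hk2
        have e1 := depth_wrap_mid hu m (i - m) (by omega)
        have e2 := depth_wrap_mid hu m k (by omega)
        rw [show m + (i - m) = i by omega] at e1
        have := h7 (m + k) (by omega) (by omega)
        omega
    · -- i in middle, j in cl region: impossible
      exfalso
      have him : i ≤ m + u.length := by
        by_contra hc
        rw [getElem?_wrap_right (by omega) (by omega)] at h4
        exact RSym.noConfusion (Option.some.inj h4)
      have e1 : depth (wrap m u) i = m + depth u (i - m) := by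
        have := depth_wrap_mid hu m (i - m) (by omega)
        rwa [show m + (i - m) = i by omega] at this
      have e2 : u[i-1-m]? = some RSym.op := by
        have := getElem?_wrap_mid u m (i-1-m) (by omega)
        rw [show m + (i-1-m) = i-1 by omega] at this
        rw [← this]; exact h4
      have e3 : depth u (i - m) = depth u (i - 1 - m) + 1 := by
        have := depth_succ_op e2
        rwa [show i-1-m+1 = i-m by omega] at this
      have e4 := hu.nonneg (i - 1 - m)
      -- depth at j - 1 (in cl region) : = m + u.length + m + ... ≤ m
      have e5 : depth (wrap m u) (j-1) ≤ m := by
        have h' : wrap m u = (List.replicate m RSym.op ++ u) ++ List.replicate m RSym.cl := by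
          simp [wrap, List.append_assoc]
        have hthis := depth_append_right (List.replicate m RSym.op ++ u)
          (List.replicate m RSym.cl) (j - 1 - (m + u.length))
        rw [dW_append, dW_ops, hu.bal] at hthis
        rw [show (List.replicate m RSym.op ++ u).length = m + u.length by simp] at hthis
        rw [show m + u.length + (j - 1 - (m + u.length)) = j - 1 by omega] at hthis
        rw [h', hthis, depth_eq, List.take_replicate, dW_cls]
        have : (0:ℤ) ≤ ((min (j - 1 - (m + u.length)) m : ℕ) : ℤ) := Int.ofNat_nonneg _
        omega
      omega

end SatProof
namespace SatProof
open RSym WTree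

lemma wordL_nil (ks : List ℕ) : wordL [] ks = [] := by rw [WTree.wordL]

lemma wordL_cons (c : WTree) (cs : List WTree) (ks : List ℕ) :
    wordL (c :: cs) ks = wrap (c.edgeW + 1) (word c) ++
      (List.replicate ks.headI RSym.dot ++ wordL cs ks.tail) := by
  rw [WTree.wordL]; simp [wrap, List.append_assoc]

lemma word_node (w : ℕ) (cs : List WTree) (ks : List ℕ) :
    word (WTree.node w cs ks) = List.replicate ks.headI RSym.dot ++ wordL cs ks.tail := by
  rw [WTree.word]

mutual
theorem good_word : ∀ (T : WTree), Good (word T)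
  | .node w cs ks => by
      rw [word_node]
      exact (Good.dots _).append (good_wordL cs ks.tail)

theorem good_wordL : ∀ (cs : List WTree) (ks : List ℕ), Good (wordL cs ks)
  | [], ks => by rw [wordL_nil]; exact Good.nil
  | c :: cs, ks => by
      rw [wordL_cons]
      exact ((good_word c).wrap _).append ((Good.dots _).append (good_wordL cs ks.tail))
end

end SatProof
namespace SatProof
open RSym WTree

lemma admissibleNR_node_iff {θ τ w : ℕ} {cs : List WTree} {ks : List ℕ} :
    AdmissibleNR θ τ (.node w cs ks) ↔
      ks.length = cs.length + 1 ∧ τ ≤ w ∧ (cs = [] → ∀ a ∈ ks, θ ≤ a) ∧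
      (cs.length = 1 → 0 < ks.sum) ∧ (∀ c ∈ cs, AdmissibleNR θ τ c) := by
  constructor
  · intro h
    cases h with
    | node w cs ks h1 h2 h3 h4 h5 => exact ⟨h1, h2, h3, h4, h5⟩
  · rintro ⟨h1, h2, h3, h4, h5⟩; exact AdmissibleNR.node w cs ks h1 h2 h3 h4 h5

theorem word_len {θ : ℕ} : ∀ (T : WTree), AdmissibleNR θ 0 T → θ ≤ (word T).length
  | .node w cs ks, h => by
    rw [admissibleNR_node_iff] at h
    obtain ⟨hlen, hw, hleaf, hone, hadm⟩ := h
    rcases cs with _ | ⟨c, cs'⟩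
    · rcases ks with _ | ⟨a, ks'⟩
      · simp at hlen
      · have ha : θ ≤ a := hleaf rfl a (by simp)
        rw [word_node]
        simp [wordL_nil]
        omega
    · have hc := word_len c (hadm c (by simp))
      rw [word_node, wordL_cons]
      simp [wrap_length]
      omega

lemma no_matched_dots {k i j : ℕ} (h : Matched (List.replicate k RSym.dot) i j) : False := by
  obtain ⟨h1, h2, h3, h4, -⟩ := h
  rw [List.getElem?_replicate] at h4
  by_cases hc : i - 1 < k
  · rw [if_pos hc] at h4; exact RSym.noConfusion (Option.some.inj h4)
  · rw [if_neg hc] at h4; cases h4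

lemma no_matched_nil {i j : ℕ} (h : Matched [] i j) : False := by
  obtain ⟨h1, h2, h3, -⟩ := h
  simp at h3; omega

mutual
theorem gap_word {θ : ℕ} : ∀ (T : WTree), AdmissibleNR θ 0 T →
    ∀ i j, Matched (word T) i j → i + θ < j
  | .node w cs ks, h => by
    rw [admissibleNR_node_iff] at h
    obtain ⟨hlen, hw, hleaf, hone, hadm⟩ := h
    intro i j hm
    rw [word_node] at hm
    rcases matched_append (Good.dots _) (good_wordL cs ks.tail) hm with ⟨-, hm'⟩ | ⟨hlt, hm'⟩
    · exact absurd hm' no_matched_dots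
    · have := gap_wordL cs ks.tail hadm _ _ hm'
      have h2 := hm'.1
      simp only [List.length_replicate] at hlt this h2
      omega

theorem gap_wordL {θ : ℕ} : ∀ (cs : List WTree) (ks : List ℕ),
    (∀ c ∈ cs, AdmissibleNR θ 0 c) → ∀ i j, Matched (wordL cs ks) i j → i + θ < j
  | [], ks => by
    intro _ i j hm
    rw [wordL_nil] at hm
    exact absurd hm no_matched_nil
  | c :: cs, ks => by
    intro hadm i j hm
    have hc : AdmissibleNR θ 0 c := hadm c (by simp)
    have hcs : ∀ c' ∈ cs, AdmissibleNR θ 0 c' := fun c' h => hadm c' (by simp [h])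
    rw [wordL_cons] at hm
    have hgw : Good (wrap (c.edgeW + 1) (word c)) := (good_word c).wrap _
    have hgy : Good (List.replicate ks.headI RSym.dot ++ wordL cs ks.tail) :=
      (Good.dots _).append (good_wordL cs ks.tail)
    rcases matched_append hgw hgy hm with ⟨-, hm'⟩ | ⟨hlt, hm'⟩
    · rcases matched_wrap (good_word c) hm' with hin | hlong
      · have := gap_word c hc _ _ hin
        have h1 := hin.1
        have h2 := hin.2.1
        omega
      · have := word_len c hc
        have h2 := hm'.2.1
        omega
    · rcases matched_append (Good.dots _) (good_wordL cs ks.tail) hm' with ⟨-, hm''⟩ | ⟨hlt', hm''⟩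
      · exact absurd hm'' no_matched_dots
      · have := gap_wordL cs ks.tail hcs _ _ hm''
        have h2 := hm''.2.1
        have h3 := hm''.1
        omega
end

lemma hasF0_append {x y : List RSym} (hx : dW x = 0) :
    HasF0 (x ++ y) ↔ HasF0 x ∨ HasF0 y := by
  constructor
  · rintro ⟨a, ha⟩
    rcases (free0_append hx).1 ha with ⟨-, h⟩ | ⟨-, h⟩
    · exact Or.inl ⟨a, h⟩
    · exact Or.inr ⟨_, h⟩
  · rintro (⟨a, ha⟩ | ⟨b, hb⟩)
    · exact ⟨a, (free0_append hx).2 (Or.inl ⟨ha.2.1, ha⟩)⟩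
    · refine ⟨x.length + b, (free0_append hx).2 (Or.inr ⟨by have := hb.1; omega, ?_⟩)⟩
      rw [show x.length + b - x.length = b by omega]
      exact hb

lemma hasF0_wordL : ∀ (cs : List WTree) (ks : List ℕ), ks.length = cs.length →
    (HasF0 (wordL cs ks) ↔ ∃ a ∈ ks, 0 < a)
  | [], ks, hlen => by
    rw [wordL_nil]
    have hks : ks = [] := List.length_eq_zero_iff.1 hlen
    subst hks
    exact ⟨fun h => absurd h not_hasF0_nil, by rintro ⟨a, ha, -⟩; exact absurd ha List.not_mem_nil⟩
  | c :: cs, ks, hlen => by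
    rcases ks with _ | ⟨k, ks'⟩
    · simp at hlen
    have hlen' : ks'.length = cs.length := by simpa using hlen
    rw [wordL_cons]
    simp only [List.headI_cons, List.tail_cons]
    rw [hasF0_append ((good_word c).wrap _).bal, hasF0_append (Good.dots k).bal,
      hasF0_dots, hasF0_wordL cs ks' hlen']
    constructor
    · rintro (h | h | h)
      · exact absurd h (not_hasF0_wrap (good_word c) (by omega))
      · exact ⟨k, by simp, h⟩
      · obtain ⟨a, ha, hpa⟩ := h
        exact ⟨a, by simp [ha], hpa⟩
    · rintro ⟨a, ha, hpa⟩
      rcases List.mem_cons.1 ha with rfl | ha'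
      · exact Or.inr (Or.inl hpa)
      · exact Or.inr (Or.inr ⟨a, ha', hpa⟩)

lemma free0_wordL_ge {θ : ℕ} : ∀ (cs : List WTree) (ks : List ℕ),
    (∀ c ∈ cs, AdmissibleNR θ 0 c) → ∀ b, Free0 (wordL cs ks) b → θ + 3 ≤ b := by
  intro cs ks hadm b hb
  rcases cs with _ | ⟨c, cs'⟩
  · rw [wordL_nil] at hb
    exact absurd ⟨b, hb⟩ not_hasF0_nil
  · rw [wordL_cons] at hb
    rcases (free0_append ((good_word c).wrap _).bal).1 hb with ⟨-, h⟩ | ⟨hlt, -⟩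
    · exact absurd h (free0_wrap (good_word c) (by omega))
    · have := word_len c (hadm c (by simp))
      rw [wrap_length] at hlt
      omega

end SatProof
namespace SatProof
open RSym WTree

lemma cornersLe_node_iff {b w : ℕ} {cs : List WTree} {ks : List ℕ} :
    CornersLe b (.node w cs ks) ↔ (∀ a ∈ ks, a ≤ b) ∧ (∀ c ∈ cs, CornersLe b c) := by
  constructor
  · intro h
    cases h with
    | node w cs ks h1 h2 => exact ⟨h1, h2⟩
  · rintro ⟨h1, h2⟩; exact CornersLe.node w cs ks h1 h2

lemma amop_node_iff {w : ℕ} {cs : List WTree} {ks : List ℕ} :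
    AtMostOnePos (.node w cs ks) ↔
      (ks.filter (fun a => 0 < a)).length ≤ 1 ∧ (∀ c ∈ cs, AtMostOnePos c) := by
  constructor
  · intro h
    cases h with
    | node w cs ks h1 h2 => exact ⟨h1, h2⟩
  · rintro ⟨h1, h2⟩; exact AtMostOnePos.node w cs ks h1 h2

lemma filter_pos_cons (k : ℕ) (ks' : List ℕ) :
    (((k :: ks').filter (fun a => 0 < a)).length ≤ 1) ↔
      ((ks'.filter (fun a => 0 < a)).length ≤ 1 ∧ ¬(0 < k ∧ ∃ a ∈ ks', 0 < a)) := by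
  by_cases hk : 0 < k
  · rw [List.filter_cons_of_pos (by simpa using hk)]
    simp only [List.length_cons]
    constructor
    · intro h
      have h0 : (ks'.filter (fun a => 0 < a)).length = 0 := by omega
      rw [List.length_eq_zero_iff] at h0
      refine ⟨by omega, ?_⟩
      rintro ⟨-, a, ha, hpa⟩
      have hmem : a ∈ ks'.filter (fun a => 0 < a) :=
        List.mem_filter.2 ⟨ha, by simpa using hpa⟩
      rw [h0] at hmem
      exact absurd hmem List.not_mem_nil
    · rintro ⟨h1, h2⟩
      have h0 : ks'.filter (fun a => 0 < a) = [] := by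
        by_contra hne
        obtain ⟨a, ha⟩ := List.exists_mem_of_ne_nil _ hne
        have hf := List.mem_filter.1 ha
        exact h2 ⟨hk, a, hf.1, by simpa using hf.2⟩
      rw [h0]; simp
  · rw [List.filter_cons_of_neg (by simpa using hk)]
    constructor
    · intro h; exact ⟨h, fun hc => hk hc.1⟩
    · rintro ⟨h, -⟩; exact h

mutual
theorem noAdd_wordL {θ : ℕ} : ∀ (cs : List WTree) (ks : List ℕ), ks.length = cs.length →
    (∀ c ∈ cs, AdmissibleNR θ 0 c) →
    (¬ HasAdd θ (wordL cs ks) ↔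
      (∀ c ∈ cs, CornersLe (θ + 1) c ∧ AtMostOnePos c) ∧
      (∀ a ∈ ks, a ≤ θ + 1) ∧ (ks.filter (fun a => 0 < a)).length ≤ 1)
  | [], ks, hlen, _ => by
    have hks : ks = [] := List.length_eq_zero_iff.1 hlen
    subst hks
    rw [wordL_nil]
    simp [not_hasAdd_nil]
  | (WTree.node wc csc ksc) :: cs, ks, hlen, hadm => by
    set c : WTree := WTree.node wc csc ksc with hc
    rcases ks with _ | ⟨k, ks'⟩
    · simp at hlen
    have hlen' : ks'.length = cs.length := by simpa using hlen
    have hadmc : AdmissibleNR θ 0 c := hadm c (by simp)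
    have hadmcs : ∀ c' ∈ cs, AdmissibleNR θ 0 c' := fun c' h => hadm c' (by simp [h])
    obtain ⟨hlc, -, -, -, hadmc'⟩ := admissibleNR_node_iff.1 hadmc
    have hnode := noAdd_word wc csc ksc hlc hadmc'
    rw [← hc] at hnode
    have hrest := noAdd_wordL cs ks' hlen' hadmcs
    have hwrapF0 : ¬ HasF0 (wrap (c.edgeW + 1) (word c)) :=
      not_hasF0_wrap (good_word c) (by omega)
    rw [wordL_cons]
    simp only [List.headI_cons, List.tail_cons]
    rw [hasAdd_append ((good_word c).wrap _) ((Good.dots _).append (good_wordL cs ks'))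
      (fun a b hfa _ => absurd hfa (free0_wrap (good_word c) (by omega)))]
    rw [hasAdd_append (Good.dots _) (good_wordL cs ks')
      (fun a b hfa hfb => by
        have h1 := (free0_dots.1 hfa).2
        have h2 := free0_wordL_ge cs ks' hadmcs b hfb
        simp only [List.length_replicate]
        omega)]
    rw [hasAdd_wrap (good_word c) (by omega), hasAdd_dots,
      hasF0_append (Good.dots k).bal, hasF0_dots, hasF0_wordL cs ks' hlen']
    simp only [not_or]
    rw [hnode, hrest]
    rw [List.forall_mem_cons, List.forall_mem_cons, filter_pos_cons]
    rw [show (¬(θ + 2 ≤ k)) ↔ k ≤ θ + 1 from by omega]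
    constructor
    · rintro ⟨hcA, ⟨hk, ⟨hall, hks, hfil⟩, hcr⟩, -⟩
      exact ⟨⟨hcA, hall⟩, ⟨hk, hks⟩, hfil, hcr⟩
    · rintro ⟨⟨hcA, hall⟩, ⟨hk, hks⟩, hfil, hcr⟩
      exact ⟨hcA, ⟨hk, ⟨hall, hks, hfil⟩, hcr⟩, fun hx => hwrapF0 hx.1⟩

theorem noAdd_word {θ : ℕ} : ∀ (w : ℕ) (cs : List WTree) (ks : List ℕ),
    ks.length = cs.length + 1 → (∀ c ∈ cs, AdmissibleNR θ 0 c) →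
    (¬ HasAdd θ (word (.node w cs ks)) ↔
      CornersLe (θ + 1) (.node w cs ks) ∧ AtMostOnePos (.node w cs ks))
  | w, cs, ks, hlen, hadm => by
    rcases ks with _ | ⟨k, ks'⟩
    · simp at hlen
    have hlen' : ks'.length = cs.length := by simpa using hlen
    have hrest := noAdd_wordL cs ks' hlen' hadm
    rw [word_node]
    simp only [List.headI_cons, List.tail_cons]
    rw [hasAdd_append (Good.dots _) (good_wordL cs ks')
      (fun a b hfa hfb => by
        have h1 := (free0_dots.1 hfa).2
        have h2 := free0_wordL_ge cs ks' hadm b hfb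
        simp only [List.length_replicate]
        omega)]
    rw [hasAdd_dots, hasF0_dots, hasF0_wordL cs ks' hlen']
    simp only [not_or]
    rw [hrest, cornersLe_node_iff, amop_node_iff, List.forall_mem_cons, filter_pos_cons]
    rw [show (¬(θ + 2 ≤ k)) ↔ k ≤ θ + 1 from by omega]
    constructor
    · rintro ⟨hk, ⟨hca, hks, hfil⟩, hcr⟩
      exact ⟨⟨⟨hk, hks⟩, fun c hc => (hca c hc).1⟩, ⟨hfil, hcr⟩, fun c hc => (hca c hc).2⟩
    · rintro ⟨⟨⟨hk, hks⟩, hcor⟩, ⟨hfil, hcr⟩, hamp⟩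
      exact ⟨hk, ⟨fun c hc => ⟨hcor c hc, hamp c hc⟩, hks, hfil⟩, hcr⟩
end

end SatProof
namespace SatProof
open RSym WTree

lemma ne_of_syms {w : List RSym} {x y : ℕ} {s t : RSym} (hst : s ≠ t)
    (hx : w[x-1]? = some s) (hy : w[y-1]? = some t) : x ≠ y := by
  rintro rfl
  rw [hx] at hy
  exact hst (Option.some.inj hy)

lemma mem_structOf {w : List RSym} {p : ℕ × ℕ} :
    p ∈ structOf w ↔ Matched w p.1 p.2 := by
  rw [structOf, Finset.mem_filter, Finset.mem_product, Finset.mem_range, Finset.mem_range]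
  constructor
  · rintro ⟨-, h⟩; exact h
  · intro h
    have h2 := h.2.1
    have h3 := h.2.2.1
    exact ⟨⟨by omega, by omega⟩, h⟩

lemma isSecStr_structOf {θ : ℕ} {w : List RSym}
    (hgap : ∀ i j, Matched w i j → i + θ < j) :
    IsSecStr θ w.length (structOf w) := by
  refine ⟨?_, ?_, ?_⟩
  · intro p hp
    have h := mem_structOf.1 hp
    exact ⟨h.1, h.2.2.1, hgap _ _ h⟩
  · intro p hp q hq hne
    have h := mem_structOf.1 hp
    have h' := mem_structOf.1 hq
    refine ⟨?_, ?_, ?_, ?_⟩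
    · intro he
      apply hne
      have := matched_right_unique (he ▸ h) h'
      exact Prod.ext he this
    · exact ne_of_syms (by simp) h.2.2.2.1 h'.2.2.2.2.1
    · exact ne_of_syms (by simp) h.2.2.2.2.1 h'.2.2.2.1
    · intro he
      apply hne
      have := matched_left_unique (he ▸ h) h'
      exact Prod.ext this he
  · intro p hp q hq
    rintro ⟨h1, h2, h3⟩
    exact matched_noncross (mem_structOf.1 hp) (mem_structOf.1 hq) h1 h2 h3

lemma not_cross1 {θ : ℕ} {w : List RSym} {i j a b : ℕ}
    (h : Matched w i j) (hA : Addable θ w a b) : ¬(i < a ∧ a < j ∧ j < b) := by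
  rintro ⟨h1, h2, h3⟩
  obtain ⟨hi1, hij, hjl, hop, hcl, heq, hmin⟩ := h
  obtain ⟨ha1, hab, hbl, hda, hdb, heq', hmin'⟩ := hA
  have e1 : depth w j = depth w (j-1) - 1 := depth_pred_cl (by omega) hcl
  have k1 := hmin a (by omega) (by omega)
  have k2 := hmin' j (by omega) (by omega)
  omega

lemma not_cross2 {θ : ℕ} {w : List RSym} {i j a b : ℕ}
    (h : Matched w i j) (hA : Addable θ w a b) : ¬(a < i ∧ i < b ∧ b < j) := by
  rintro ⟨h1, h2, h3⟩
  obtain ⟨hi1, hij, hjl, hop, hcl, heq, hmin⟩ := h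
  obtain ⟨ha1, hab, hbl, hda, hdb, heq', hmin'⟩ := hA
  have e1 : depth w i = depth w (i-1) + 1 := depth_pred_op (by omega) hop
  have k1 := hmin' (i-1) (by omega) (by omega)
  have k2 := hmin b (by omega) (by omega)
  omega

lemma saturated_iff_noAdd {θ : ℕ} {w : List RSym} (hw : Good w)
    (hgap : ∀ i j, Matched w i j → i + θ < j) :
    Saturated θ w.length (structOf w) ↔ ¬ HasAdd θ w := by
  constructor
  · rintro ⟨hsec, hmax⟩ ⟨a, b, hA⟩
    obtain ⟨ha1, hab, hbl, hda, hdb, heqd, hmin⟩ := hA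
    have hnotmem : (a, b) ∉ structOf w := by
      rw [mem_structOf]
      rintro ⟨-, -, -, h4, -⟩
      rw [hda] at h4
      exact RSym.noConfusion (Option.some.inj h4)
    apply hmax (a, b) hnotmem
    refine ⟨?_, ?_, ?_⟩
    · intro p hp
      rcases Finset.mem_insert.1 hp with rfl | hp
      · exact ⟨ha1, hbl, hab⟩
      · exact hsec.1 p hp
    · intro p hp q hq hne
      rcases Finset.mem_insert.1 hp with rfl | hp <;>
        rcases Finset.mem_insert.1 hq with rfl | hq
      · exact absurd rfl hne
      · have h' := mem_structOf.1 hq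
        exact ⟨ne_of_syms (by simp) hda h'.2.2.2.1,
          ne_of_syms (by simp) hda h'.2.2.2.2.1,
          ne_of_syms (by simp) hdb h'.2.2.2.1,
          ne_of_syms (by simp) hdb h'.2.2.2.2.1⟩
      · have h' := mem_structOf.1 hp
        exact ⟨ne_of_syms (by simp) h'.2.2.2.1 hda,
          ne_of_syms (by simp) h'.2.2.2.1 hdb,
          ne_of_syms (by simp) h'.2.2.2.2.1 hda,
          ne_of_syms (by simp) h'.2.2.2.2.1 hdb⟩
      · exact hsec.2.1 p hp q hq hne
    · intro p hp q hq
      rcases Finset.mem_insert.1 hp with rfl | hp <;>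
        rcases Finset.mem_insert.1 hq with rfl | hq
      · rintro ⟨h1, -⟩; omega
      · exact not_cross2 (mem_structOf.1 hq)
          ⟨ha1, hab, hbl, hda, hdb, heqd, hmin⟩
      · exact not_cross1 (mem_structOf.1 hp)
          ⟨ha1, hab, hbl, hda, hdb, heqd, hmin⟩
      · exact hsec.2.2 p hp q hq
  · intro hno
    have hsec := isSecStr_structOf hgap
    refine ⟨hsec, ?_⟩
    rintro ⟨a, b⟩ hq hins
    apply hno
    obtain ⟨hq1, hq2, hq3⟩ := hins
    have hmem : (a, b) ∈ insert (a, b) (structOf w) := Finset.mem_insert_self _ _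
    obtain ⟨ha1, hbl, hab⟩ := hq1 (a, b) hmem
    simp only at ha1 hbl hab
    -- a and b carry dots
    have hdot : ∀ x, 1 ≤ x → x ≤ w.length → x = a ∨ x = b → w[x-1]? = some RSym.dot := by
      intro x hx1 hx2 hxe
      rcases hsym : w[x-1]? with _ | s
      · rw [List.getElem?_eq_none_iff] at hsym; omega
      rcases s
      · rfl
      · exfalso
        obtain ⟨j, hj⟩ := exists_match_op hw hx1 hsym
        have hmem' : (x, j) ∈ structOf w := mem_structOf.2 hj
        have hne : (a, b) ≠ (x, j) := by
          intro h
          exact hq (h ▸ hmem')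
        have hd := hq2 (a, b) hmem (x, j) (Finset.mem_insert_of_mem hmem') hne
        rcases hxe with rfl | rfl
        · exact hd.1 rfl
        · exact hd.2.2.1 rfl
      · exfalso
        obtain ⟨i, hi⟩ := exists_match_cl hw hx1 hsym
        have hmem' : (i, x) ∈ structOf w := mem_structOf.2 hi
        have hne : (a, b) ≠ (i, x) := by
          intro h
          exact hq (h ▸ hmem')
        have hd := hq2 (a, b) hmem (i, x) (Finset.mem_insert_of_mem hmem') hne
        rcases hxe with rfl | rfl
        · exact hd.2.1 rfl
        · exact hd.2.2.2 rfl
    have hadot : w[a-1]? = some RSym.dot := hdot a ha1 (by omega) (Or.inl rfl)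
    have hbdot : w[b-1]? = some RSym.dot := hdot b (by omega) hbl (Or.inr rfl)
    -- no dip below depth a on [a,b]
    have hnodip : ∀ k, a ≤ k → k ≤ b → depth w a ≤ depth w k := by
      by_contra hc
      push_neg at hc
      obtain ⟨k0, hk01, hk02, hk03⟩ := hc
      classical
      obtain ⟨k1, hka, hkb, hkd, hminf⟩ : ∃ k1, a ≤ k1 ∧ k1 ≤ b ∧
          depth w k1 < depth w a ∧ ∀ m, a ≤ m → m < k1 → depth w a ≤ depth w m := by
        have hex : ∃ k, a ≤ k ∧ k ≤ b ∧ depth w k < depth w a := ⟨k0, hk01, hk02, hk03⟩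
        obtain ⟨h1, h2, h3⟩ := Nat.find_spec hex
        refine ⟨Nat.find hex, h1, h2, h3, ?_⟩
        intro m hm1 hm2
        by_contra hcm
        exact absurd ⟨hm1, by omega, by omega⟩ (Nat.find_min hex hm2)
      have hk1a : a < k1 := by
        rcases eq_or_lt_of_le hka with rfl | h
        · omega
        · exact h
      have hprev : depth w a ≤ depth w (k1 - 1) := hminf (k1 - 1) (by omega) (by omega)
      have hdrop : depth w (k1 - 1 + 1) < depth w (k1 - 1) := by
        rw [Nat.sub_add_cancel (by omega)]; omega
      obtain ⟨hsymcl, hstep⟩ := sym_cl_of_drop hdrop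
      rw [Nat.sub_add_cancel (by omega)] at hstep
      obtain ⟨i0, hi0⟩ := exists_match_cl hw (by omega) hsymcl
      have hik1 : i0 < k1 := hi0.2.1
      have hdi0 : depth w i0 = depth w (k1 - 1) := hi0.2.2.2.2.2.1
      have hi0a : i0 < a := by
        by_contra hge
        push_neg at hge
        have hne : i0 ≠ a := ne_of_syms (by simp) hi0.2.2.2.1 hadot
        have hlt : a < i0 := by omega
        have e1 : depth w i0 = depth w (i0 - 1) + 1 := depth_pred_op hi0.1 hi0.2.2.2.1
        have e2 := hminf (i0 - 1) (by omega) (by omega)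
        omega
      have hk1b : k1 ≠ b := ne_of_syms (by simp) hsymcl hbdot
      have hcr := hq3 (i0, k1) (Finset.mem_insert_of_mem (mem_structOf.2 hi0)) (a, b) hmem
      exact hcr ⟨hi0a, by omega, by omega⟩
    -- equal depths
    have heqd : depth w a = depth w b := by
      have hge := hnodip b (by omega) le_rfl
      by_contra hne
      have hgt : depth w a < depth w b := lt_of_le_of_ne hge hne
      classical
      obtain ⟨t, htb, hPt, ht_ge, hgt'⟩ : ∃ t, t ≤ b ∧ depth w t ≤ depth w a ∧ a ≤ t ∧
          ∀ m, t < m → m ≤ b → depth w a < depth w m := by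
        refine ⟨Nat.findGreatest (fun m => depth w m ≤ depth w a) b,
          Nat.findGreatest_le b,
          Nat.findGreatest_spec (P := fun m => depth w m ≤ depth w a) (m := a)
            (by omega) le_rfl,
          Nat.le_findGreatest (P := fun m => depth w m ≤ depth w a) (by omega) le_rfl, ?_⟩
        intro m h1 h2
        have := Nat.findGreatest_is_greatest h1 h2
        omega
      have htneb : t ≠ b := by
        intro h
        rw [h] at hPt
        omega
      have hrise : depth w t < depth w (t + 1) := by
        have := hgt' (t + 1) (by omega) (by omega)
        omega
      obtain ⟨hsymop, hstep⟩ := sym_op_of_rise hrise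
      have hsymop' : w[(t+1)-1]? = some RSym.op := by simpa using hsymop
      obtain ⟨j1, hj1⟩ := exists_match_op hw (by omega) hsymop'
      have hi1b : t + 1 ≠ b := ne_of_syms (by simp) hsymop' hbdot
      have hbj1 : b < j1 := by
        by_contra hle
        push_neg at hle
        have hj1lt : t + 1 < j1 := hj1.2.1
        have e1 : depth w j1 = depth w (j1 - 1) - 1 :=
          depth_pred_cl (by omega) hj1.2.2.2.2.1
        have e2 : depth w (t+1) = depth w (j1 - 1) := hj1.2.2.2.2.2.1
        have e3 := hgt' j1 (by have := hj1.2.1; omega) hle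
        omega
      have hcr := hq3 (a, b) hmem (t + 1, j1)
        (Finset.mem_insert_of_mem (mem_structOf.2 hj1)) 
      exact hcr ⟨by omega, by omega, hbj1⟩
    exact ⟨a, b, ha1, hab, hbl, hadot, hbdot, heqd, hnodip⟩

end SatProof
/-- With `τ = 0`, a secondary structure with at least one link is saturated
iff its dual weighted rooted plane tree has all corners of weight at most
`θ + 1` and at most one corner of strictly positive weight at each node. -/
theorem saturated_iff_tree_conditions (θ : ℕ) (T : WTree)
    (hT : Admissible θ 0 T) :
    Saturated θ (T.word).length (structOf T.word) ↔
      CornersLe (θ + 1) T ∧ AtMostOnePos T := by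
  rcases T with ⟨w, cs, ks⟩
  obtain ⟨hlen, hne, hadm⟩ := hT
  have hgap : ∀ i j, Matched (WTree.word (.node w cs ks)) i j → i + θ < j := by
    intro i j hm
    rw [SatProof.word_node] at hm
    rcases SatProof.matched_append (SatProof.Good.dots _)
        (SatProof.good_wordL cs ks.tail) hm with ⟨-, hm'⟩ | ⟨hlt, hm'⟩
    · exact absurd hm' SatProof.no_matched_dots
    · have := SatProof.gap_wordL cs ks.tail hadm _ _ hm'
      have h2 := hm'.1
      simp only [List.length_replicate] at hlt this h2
      omega
  exact (SatProof.saturated_iff_noAdd (SatProof.good_word _) hgap).trans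
    (SatProof.noAdd_word w cs ks hlen hadm)
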